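/- Let (Ω, μ) be a probability space, H a real inner product space, T a positive integer, and g₁, …, g_T : Ω → H square-integrable random vectors that are pairwise L²-orthogonal (E[⟨g_s, g_t⟩] = 0 for s ≠ t) and satisfy E[‖g_t‖²] ≤ G² for every t, where G ≥ 0. Let R : Ω → ℝ be square-integrable and independent of the tuple (g₁, …, g_T). Let S ⊆ {1, …, T} be a subset with |S| = k, and let a₁, …, a_T be real allocation weights with 0 ≤ a_t ≤ 1 for all t and a_t = 0 for every t ∉ S. Then the allocated estimator X := R · ∑_{t=1}^T a_t g_t satisfies Var[X] := E[‖X‖²] − ‖E[X]‖² ≤ k · G² · E[R²]. -/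

import Mathlib

open MeasureTheory ProbabilityTheory
open scoped RealInnerProductSpace

/-- If `f` is independent of `g` and `h` is measurable with respect to the σ-algebra
generated by `g`, then `f` is independent of `h`. -/
lemma indepFun_of_measurable_comap {Ω β γ δ : Type*} {mΩ : MeasurableSpace Ω}
    [mβ : MeasurableSpace β] [mγ : MeasurableSpace γ] [mδ : MeasurableSpace δ]
    {μ : Measure Ω} {f : Ω → β} {g : Ω → γ} (hfg : IndepFun f g μ) {h : Ω → δ}
    (hm : Measurable[MeasurableSpace.comap g mγ] h) : IndepFun f h μ := by
  rw [IndepFun_iff] at hfg ⊢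
  intro t1 t2 ht1 ht2
  exact hfg t1 t2 ht1 (hm.comap_le _ ht2)

/-- **Variance reduction via credit allocation (Proposition A.2).**
With `g 1, …, g T` square-integrable, pairwise L²-orthogonal random vectors with
`E[‖g t‖²] ≤ G²`, `R : Ω → ℝ` square-integrable and independent of the tuple
`(g 1, …, g T)`, and allocation weights `a t ∈ [0,1]` supported on a subset
`S ⊆ {1, …, T}` of size `k`, the allocated estimator `X := R • ∑ t, a t • g t`
has variance `Var[X] = E[‖X‖²] − ‖E[X]‖² ≤ k · G² · E[R²]`. -/
theorem stmt_2
    {Ω : Type*} [MeasurableSpace Ω] (μ : Measure Ω) [IsProbabilityMeasure μ]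
    {H : Type*} [NormedAddCommGroup H] [InnerProductSpace ℝ H]
    [MeasurableSpace H] [BorelSpace H]
    (T : ℕ) (hT : 0 < T) (g : Fin T → Ω → H)
    (hg : ∀ t, MemLp (g t) 2 μ)
    (horth : ∀ s t, s ≠ t → ∫ ω, ⟪g s ω, g t ω⟫ ∂μ = 0)
    (G : ℝ) (hG : 0 ≤ G)
    (hbound : ∀ t, ∫ ω, ‖g t ω‖ ^ 2 ∂μ ≤ G ^ 2)
    (R : Ω → ℝ) (hR : MemLp R 2 μ)
    (hindep : IndepFun R (fun ω => fun t => g t ω) μ)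
    (S : Finset (Fin T)) (k : ℕ) (hk : S.card = k)
    (a : Fin T → ℝ)
    (ha0 : ∀ t, 0 ≤ a t) (ha1 : ∀ t, a t ≤ 1)
    (haS : ∀ t ∉ S, a t = 0) :
    (∫ ω, ‖R ω • ∑ t, a t • g t ω‖ ^ 2 ∂μ)
        - ‖∫ ω, R ω • ∑ t, a t • g t ω ∂μ‖ ^ 2
      ≤ (k : ℝ) * G ^ 2 * ∫ ω, (R ω) ^ 2 ∂μ := by
  classical
  -- strongly measurable versions of the g t
  set g' : Fin T → Ω → H := fun t => (hg t).1.mk (g t) with hg'def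
  have hg'sm : ∀ t, StronglyMeasurable (g' t) := fun t => (hg t).1.stronglyMeasurable_mk
  have hg'ae : ∀ᵐ ω ∂μ, ∀ t, g t ω = g' t ω := ae_all_iff.2 fun t => (hg t).1.ae_eq_mk
  set Y : Ω → H := fun ω => ∑ t, a t • g t ω with hYdef
  set Y' : Ω → H := fun ω => ∑ t, a t • g' t ω with hY'def
  have hYae : Y =ᵐ[μ] Y' := by
    filter_upwards [hg'ae] with ω hω
    simp only [hYdef, hY'def]
    exact Finset.sum_congr rfl fun t _ => by rw [hω t]
  -- MemLp facts
  have hYmem : MemLp Y 2 μ := by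
    have h := memLp_finset_sum' (μ := μ) Finset.univ (fun t _ => (hg t).const_smul (a t))
    have he : (∑ t, a t • g t) = Y := by
      funext ω; simp [hYdef, Finset.sum_apply]
    rwa [he] at h
  have hY'mem : MemLp Y' 2 μ := hYmem.ae_eq hYae
  -- independence of R² and ‖Y‖²
  set tup' : Ω → (Fin T → H) := fun ω t => g' t ω with htup'def
  have hindep' : IndepFun R tup' μ := by
    refine hindep.congr (ae_eq_refl _) ?_
    filter_upwards [hg'ae] with ω hω
    funext t; exact hω t
  have htupm : Measurable[MeasurableSpace.comap tup' MeasurableSpace.pi] tup' :=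
    Measurable.of_comap_le le_rfl
  have hco : ∀ t, Measurable[MeasurableSpace.comap tup' MeasurableSpace.pi] (g' t) :=
    fun t => (measurable_pi_apply t).comp htupm
  have hsm' : ∀ t, StronglyMeasurable[MeasurableSpace.comap tup' MeasurableSpace.pi] (g' t) :=
    fun t =>
      (stronglyMeasurable_iff_measurable_separable).2 ⟨hco t, (hg'sm t).isSeparable_range⟩
  have hY'sm' : StronglyMeasurable[MeasurableSpace.comap tup' MeasurableSpace.pi] Y' := by
    have h : StronglyMeasurable[MeasurableSpace.comap tup' MeasurableSpace.pi]
        (∑ t, a t • g' t) :=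
      Finset.stronglyMeasurable_sum Finset.univ (fun t _ => (hsm' t).const_smul (a t))
    have he : (∑ t, a t • g' t) = Y' := by
      funext ω; simp [hY'def, Finset.sum_apply]
    rwa [he] at h
  have hnormsm' : Measurable[MeasurableSpace.comap tup' MeasurableSpace.pi]
      (fun ω => ‖Y' ω‖ ^ 2) :=
    hY'sm'.norm.measurable.pow_const 2
  have hIndep2 : IndepFun R (fun ω => ‖Y' ω‖ ^ 2) μ :=
    indepFun_of_measurable_comap hindep' hnormsm'
  have hIndep3 : IndepFun (fun ω => (R ω) ^ 2) (fun ω => ‖Y' ω‖ ^ 2) μ := by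
    have := hIndep2.comp (measurable_id.pow_const 2) measurable_id
    exact this
  -- integrability
  have hR2 : Integrable (fun ω => (R ω) ^ 2) μ := hR.integrable_sq
  have hY'2 : Integrable (fun ω => ‖Y' ω‖ ^ 2) μ :=
    (memLp_two_iff_integrable_sq_norm hY'mem.1).1 hY'mem
  -- factorization via independence
  have hfact : ∫ ω, (R ω) ^ 2 * ‖Y' ω‖ ^ 2 ∂μ
      = (∫ ω, (R ω) ^ 2 ∂μ) * ∫ ω, ‖Y' ω‖ ^ 2 ∂μ :=
    hIndep3.integral_fun_mul_eq_mul_integral hR2.aestronglyMeasurable hY'2.aestronglyMeasurable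
  -- rewrite the main integral
  have hmain : ∫ ω, ‖R ω • Y ω‖ ^ 2 ∂μ = ∫ ω, (R ω) ^ 2 * ‖Y' ω‖ ^ 2 ∂μ := by
    refine integral_congr_ae ?_
    filter_upwards [hYae] with ω hω
    rw [hω, norm_smul, mul_pow]
    simp [Real.norm_eq_abs, sq_abs]
  -- bound on ∫ ‖Y‖²
  have hinner_int : ∀ s t : Fin T, Integrable (fun ω => ⟪g s ω, g t ω⟫) μ := by
    intro s t
    have h1 := (hg s).coeFn_toLp
    have h2 := (hg t).coeFn_toLp
    have := L2.integrable_inner (𝕜 := ℝ) ((hg s).toLp (g s)) ((hg t).toLp (g t))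
    refine (integrable_congr ?_).1 this
    filter_upwards [h1, h2] with ω hω1 hω2
    rw [hω1, hω2]
  have hexpand : ∀ ω, ‖Y ω‖ ^ 2 = ∑ s, ∑ t, (a s * a t) * ⟪g s ω, g t ω⟫ := by
    intro ω
    rw [← real_inner_self_eq_norm_sq]
    simp only [hYdef, sum_inner, inner_sum, real_inner_smul_left, real_inner_smul_right]
    exact Finset.sum_congr rfl fun s _ => Finset.sum_congr rfl fun t _ => by rw [real_inner_comm (g t ω) (g s ω)]; ring
  have hYint : ∫ ω, ‖Y ω‖ ^ 2 ∂μ = ∑ s, ∑ t, (a s * a t) * ∫ ω, ⟪g s ω, g t ω⟫ ∂μ := by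
    simp_rw [hexpand]
    rw [integral_finset_sum _ fun s _ => integrable_finset_sum _
      fun t _ => (hinner_int s t).const_mul _]
    refine Finset.sum_congr rfl fun s _ => ?_
    rw [integral_finset_sum _ fun t _ => (hinner_int s t).const_mul _]
    exact Finset.sum_congr rfl fun t _ => integral_const_mul _ _
  have hdiag : ∫ ω, ‖Y ω‖ ^ 2 ∂μ = ∑ t, (a t) ^ 2 * ∫ ω, ‖g t ω‖ ^ 2 ∂μ := by
    rw [hYint]
    refine Finset.sum_congr rfl fun s _ => ?_
    rw [Finset.sum_eq_single s]
    · have hgg : ∫ ω, ⟪g s ω, g s ω⟫ ∂μ = ∫ ω, ‖g s ω‖ ^ 2 ∂μ :=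
        integral_congr_ae (ae_of_all _ fun ω => real_inner_self_eq_norm_sq _)
      rw [hgg]; ring
    · intro t _ hts
      rw [horth s t (fun h => hts h.symm), mul_zero]
    · intro h; exact absurd (Finset.mem_univ s) h
  have hYbound : ∫ ω, ‖Y ω‖ ^ 2 ∂μ ≤ (k : ℝ) * G ^ 2 := by
    rw [hdiag, ← hk]
    have hsub : ∑ t, (a t) ^ 2 * ∫ ω, ‖g t ω‖ ^ 2 ∂μ
        = ∑ t ∈ S, (a t) ^ 2 * ∫ ω, ‖g t ω‖ ^ 2 ∂μ := by
      refine (Finset.sum_subset (Finset.subset_univ S) fun t _ ht => ?_).symm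
      rw [haS t ht]; ring
    rw [hsub]
    have : ∑ t ∈ S, (a t) ^ 2 * ∫ ω, ‖g t ω‖ ^ 2 ∂μ ≤ ∑ _t ∈ S, G ^ 2 := by
      refine Finset.sum_le_sum fun t _ => ?_
      have h1 : (a t) ^ 2 ≤ 1 := pow_le_one₀ (ha0 t) (ha1 t)
      have h2 : (0:ℝ) ≤ ∫ ω, ‖g t ω‖ ^ 2 ∂μ :=
        integral_nonneg fun ω => by positivity
      calc (a t) ^ 2 * ∫ ω, ‖g t ω‖ ^ 2 ∂μ ≤ 1 * ∫ ω, ‖g t ω‖ ^ 2 ∂μ :=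
            mul_le_mul_of_nonneg_right h1 h2
        _ = ∫ ω, ‖g t ω‖ ^ 2 ∂μ := one_mul _
        _ ≤ G ^ 2 := hbound t
    simpa [Finset.sum_const, nsmul_eq_mul] using this
  have hY'eqY : ∫ ω, ‖Y' ω‖ ^ 2 ∂μ = ∫ ω, ‖Y ω‖ ^ 2 ∂μ := by
    refine integral_congr_ae ?_
    filter_upwards [hYae] with ω hω
    rw [hω]
  have hR2nn : (0:ℝ) ≤ ∫ ω, (R ω) ^ 2 ∂μ := integral_nonneg fun ω => sq_nonneg _
  have hfinal : ∫ ω, ‖R ω • Y ω‖ ^ 2 ∂μ ≤ (k : ℝ) * G ^ 2 * ∫ ω, (R ω) ^ 2 ∂μ := by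
    rw [hmain, hfact, hY'eqY]
    rw [mul_comm ((k:ℝ) * G ^ 2) _]
    exact mul_le_mul_of_nonneg_left hYbound hR2nn
  calc (∫ ω, ‖R ω • Y ω‖ ^ 2 ∂μ) - ‖∫ ω, R ω • Y ω ∂μ‖ ^ 2
      ≤ ∫ ω, ‖R ω • Y ω‖ ^ 2 ∂μ := sub_le_self _ (by positivity)
    _ ≤ (k : ℝ) * G ^ 2 * ∫ ω, (R ω) ^ 2 ∂μ := hfinal
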